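/- Let φ : [0,∞) → ℝ be a Lipschitz map with φ(0) = 0, and define Ω_φ : c₀₀ → ℓ₂ by Ω_φ(x) = Σₙ xₙ φ(−log(|xₙ|/‖x‖₂)) eₙ for x ≠ 0 and Ω_φ(0) = 0. Suppose there exists a constant C such that for all N, M ≥ 1, |φ(log √M) + φ(log √N) − φ(log √(NM))| ≤ C. Then sup_{a,b > 0} |φ(a+b) − φ(a) − φ(b)| < ∞, and consequently there exists c ∈ ℝ with sup_{t>0}|φ(t) − ct| < ∞. -/

import Mathlib

open Real

/-- The ℓ₂ norm of a finitely supported sequence. -/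
noncomputable def l2 (x : ℕ →₀ ℝ) : ℝ :=
  Real.sqrt (∑ n ∈ x.support, (x n) ^ 2)

/-- The Kalton–Peck type quasi-linear map `Ω_φ(x) = ∑ₙ xₙ φ(log(‖x‖₂/|xₙ|)) eₙ` on `c₀₀`. -/
noncomputable def Omega (φ : ℝ → ℝ) (x : ℕ →₀ ℝ) : ℕ →₀ ℝ :=
  Finsupp.onFinset x.support
    (fun n => x n * φ (Real.log (l2 x / |x n|)))
    (fun n h => Finsupp.mem_support_iff.2 (left_ne_zero_of_mul h))

open Filter

/-- Approximation of positive reals by `log √M` for natural `M`. -/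
lemma approx_log (a : ℝ) (ha : 0 < a) :
    ∃ M : ℕ, 1 ≤ M ∧ |Real.log M / 2 - a| ≤ Real.log 2 / 2 := by
  refine ⟨⌈Real.exp (2 * a)⌉₊, Nat.one_le_ceil_iff.2 (Real.exp_pos _), ?_⟩
  set M := ⌈Real.exp (2 * a)⌉₊ with hM
  have h1 : Real.exp (2 * a) ≤ (M : ℝ) := Nat.le_ceil _
  have h2 : (M : ℝ) < Real.exp (2 * a) + 1 :=
    Nat.ceil_lt_add_one (Real.exp_pos _).le
  have he1 : (1 : ℝ) ≤ Real.exp (2 * a) := by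
    rw [show (1:ℝ) = Real.exp 0 by simp]
    exact Real.exp_le_exp.2 (by positivity)
  have hlow : 2 * a ≤ Real.log M := by
    calc 2 * a = Real.log (Real.exp (2 * a)) := (Real.log_exp _).symm
    _ ≤ Real.log M := Real.log_le_log (Real.exp_pos _) h1
  have hup : Real.log M ≤ 2 * a + Real.log 2 := by
    have : (M : ℝ) ≤ 2 * Real.exp (2 * a) := by nlinarith
    calc Real.log M ≤ Real.log (2 * Real.exp (2 * a)) :=
      Real.log_le_log (by positivity) this
    _ = Real.log 2 + 2 * a := by rw [Real.log_mul (by norm_num) (Real.exp_ne_zero _), Real.log_exp]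
    _ = 2 * a + Real.log 2 := by ring
  rw [abs_le]
  constructor <;> nlinarith

theorem stmt5 (φ : ℝ → ℝ) (L : ℝ) (hφ0 : φ 0 = 0)
    (hLip : ∀ s ∈ Set.Ici (0:ℝ), ∀ t ∈ Set.Ici (0:ℝ), |φ s - φ t| ≤ L * |s - t|)
    (C : ℝ)
    (hC : ∀ N M : ℕ, 1 ≤ N → 1 ≤ M →
      |φ (Real.log (Real.sqrt M)) + φ (Real.log (Real.sqrt N)) -
        φ (Real.log (Real.sqrt ((N : ℝ) * M)))| ≤ C) :
    (∃ C' : ℝ, ∀ a b : ℝ, 0 < a → 0 < b → |φ (a + b) - φ a - φ b| ≤ C') ∧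
    ∃ c K : ℝ, ∀ t : ℝ, 0 < t → |φ t - c * t| ≤ K := by
  have hL : 0 ≤ L := by
    have := hLip 1 (by norm_num) 0 (by norm_num)
    simp at this
    exact le_trans (abs_nonneg _) this
  -- Part 1: approximate additivity on (0, ∞)
  have hlog2 : (0:ℝ) < Real.log 2 := Real.log_pos (by norm_num)
  have part1 : ∀ a b : ℝ, 0 < a → 0 < b →
      |φ (a + b) - φ a - φ b| ≤ C + 2 * L * Real.log 2 := by
    intro a b ha hb
    obtain ⟨M, hM1, hMa⟩ := approx_log a ha
    obtain ⟨N, hN1, hNb⟩ := approx_log b hb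
    have hMpos : (0:ℝ) < M := by exact_mod_cast hM1
    have hNpos : (0:ℝ) < N := by exact_mod_cast hN1
    have hM1' : (1:ℝ) ≤ M := by exact_mod_cast hM1
    have hN1' : (1:ℝ) ≤ N := by exact_mod_cast hN1
    have hlogM : 0 ≤ Real.log M := Real.log_nonneg hM1'
    have hlogN : 0 ≤ Real.log N := Real.log_nonneg hN1'
    set P := Real.log M / 2 with hP
    set Q := Real.log N / 2 with hQ
    have hsM : Real.log (Real.sqrt M) = P := Real.log_sqrt (Nat.cast_nonneg _)
    have hsN : Real.log (Real.sqrt N) = Q := Real.log_sqrt (Nat.cast_nonneg _)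
    have hsNM : Real.log (Real.sqrt ((N:ℝ) * M)) = Q + P := by
      rw [Real.log_sqrt (by positivity), Real.log_mul (ne_of_gt hNpos) (ne_of_gt hMpos)]
      ring
    have key := hC N M hN1 hM1
    rw [hsM, hsN, hsNM] at key
    have hP0 : (0:ℝ) ≤ P := by positivity
    have hQ0 : (0:ℝ) ≤ Q := by positivity
    have e1 : |φ (a + b) - φ (Q + P)| ≤ L * |a + b - (Q + P)| :=
      hLip _ (Set.mem_Ici.2 (by positivity)) _ (Set.mem_Ici.2 (by positivity))
    have e2 : |φ P - φ a| ≤ L * |P - a| := hLip _ (Set.mem_Ici.2 hP0) _ (Set.mem_Ici.2 ha.le)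
    have e3 : |φ Q - φ b| ≤ L * |Q - b| := hLip _ (Set.mem_Ici.2 hQ0) _ (Set.mem_Ici.2 hb.le)
    have d1 : |a + b - (Q + P)| ≤ Real.log 2 := by
      have : a + b - (Q + P) = (a - P) + (b - Q) := by ring
      rw [this]
      calc |(a - P) + (b - Q)| ≤ |a - P| + |b - Q| := abs_add_le _ _
      _ ≤ Real.log 2 / 2 + Real.log 2 / 2 := by
          rw [abs_sub_comm a P, abs_sub_comm b Q]
          exact add_le_add hMa hNb
      _ = Real.log 2 := by ring
    have d2 : |P - a| ≤ Real.log 2 / 2 := hMa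
    have d3 : |Q - b| ≤ Real.log 2 / 2 := hNb
    calc |φ (a + b) - φ a - φ b|
        = |(φ (a + b) - φ (Q + P)) + (φ P - φ a) + (φ Q - φ b)
            - (φ P + φ Q - φ (Q + P))| := by ring_nf
      _ ≤ |(φ (a + b) - φ (Q + P)) + (φ P - φ a) + (φ Q - φ b)|
            + |φ P + φ Q - φ (Q + P)| := abs_sub _ _
      _ ≤ (|φ (a + b) - φ (Q + P)| + |φ P - φ a| + |φ Q - φ b|) + C := by
          gcongr
          exact (abs_add_le _ _).trans (by gcongr; exact abs_add_le _ _)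
      _ ≤ (L * Real.log 2 + L * (Real.log 2 / 2) + L * (Real.log 2 / 2)) + C := by
          gcongr
          · exact e1.trans (by gcongr)
          · exact e2.trans (by gcongr)
          · exact e3.trans (by gcongr)
      _ = C + 2 * L * Real.log 2 := by ring
  set C' := C + 2 * L * Real.log 2 with hC'
  refine ⟨⟨C', part1⟩, ?_⟩
  have hC'0 : 0 ≤ C' := le_trans (abs_nonneg _) (part1 1 1 one_pos one_pos)
  -- Part 2: Hyers' theorem
  set u : ℝ → ℕ → ℝ := fun t n => φ (2 ^ n * t) / 2 ^ n with hu
  have hstep : ∀ t : ℝ, 0 < t → ∀ n : ℕ,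
      dist (u t n) (u t (n + 1)) ≤ (C' / 2) * (1 / 2) ^ n := by
    intro t ht n
    have hx : (0:ℝ) < 2 ^ n * t := by positivity
    have key := part1 (2 ^ n * t) (2 ^ n * t) hx hx
    have h2 : (2:ℝ) ^ (n+1) * t = 2 ^ n * t + 2 ^ n * t := by ring
    rw [Real.dist_eq, hu]
    simp only
    rw [h2]
    have hpow : (0:ℝ) < 2 ^ n := by positivity
    rw [show φ (2 ^ n * t) / 2 ^ n - φ (2 ^ n * t + 2 ^ n * t) / 2 ^ (n+1)
        = -((φ (2 ^ n * t + 2 ^ n * t) - φ (2 ^ n * t) - φ (2 ^ n * t)) / 2 ^ (n+1)) by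
      field_simp; ring]
    rw [abs_neg, abs_div, abs_of_pos (show (0:ℝ) < 2 ^ (n+1) by positivity)]
    rw [div_le_iff₀ (by positivity)]
    calc |φ (2 ^ n * t + 2 ^ n * t) - φ (2 ^ n * t) - φ (2 ^ n * t)| ≤ C' := key
      _ = C' / 2 * (1 / 2) ^ n * 2 ^ (n+1) := by
          have hpow2 : ((1:ℝ)/2) ^ n * 2 ^ (n+1) = 2 := by
            rw [one_div, inv_pow, pow_succ, ← mul_assoc,
              inv_mul_cancel₀ (show ((2:ℝ)^n) ≠ 0 by positivity), one_mul]
          rw [mul_assoc, hpow2]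
          ring
  have hex : ∀ t : ℝ, ∃ l : ℝ, 0 < t → Filter.Tendsto (u t) atTop (nhds l) := by
    intro t
    by_cases ht : 0 < t
    · obtain ⟨l, hl⟩ := cauchySeq_tendsto_of_complete
        (cauchySeq_of_le_geometric (1/2) (C'/2) (by norm_num) (hstep t ht))
      exact ⟨l, fun _ => hl⟩
    · exact ⟨0, fun h => absurd h ht⟩
  choose g hg using hex
  -- |φ t - g t| ≤ C'
  have hclose : ∀ t : ℝ, 0 < t → |φ t - g t| ≤ C' := by
    intro t ht
    have := dist_le_of_le_geometric_of_tendsto₀ (1/2) (C'/2) (by norm_num)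
      (hstep t ht) (hg t ht)
    rw [Real.dist_eq] at this
    have hu0 : u t 0 = φ t := by simp [hu]
    rw [hu0] at this
    calc |φ t - g t| ≤ C' / 2 / (1 - 1/2) := this
      _ = C' := by ring
  -- g is additive on positives
  have hgadd : ∀ a b : ℝ, 0 < a → 0 < b → g (a + b) = g a + g b := by
    intro a b ha hb
    have h1 : Filter.Tendsto (fun n => u a n + u b n) atTop (nhds (g a + g b)) :=
      (hg a ha).add (hg b hb)
    have h2 : Filter.Tendsto (fun n => u (a + b) n - (u a n + u b n)) atTop (nhds 0) := by
      have htend : Filter.Tendsto (fun n : ℕ => C' * (1/2) ^ n) atTop (nhds 0) := by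
        simpa using (tendsto_pow_atTop_nhds_zero_of_lt_one (by norm_num : (0:ℝ) ≤ 1/2)
          (by norm_num)).const_mul C'
      refine squeeze_zero_norm (fun n => ?_) htend
      · have hpow : (0:ℝ) < 2 ^ n := by positivity
        have key := part1 (2 ^ n * a) (2 ^ n * b) (by positivity) (by positivity)
        have : u (a + b) n - (u a n + u b n)
            = (φ (2 ^ n * a + 2 ^ n * b) - φ (2 ^ n * a) - φ (2 ^ n * b)) / 2 ^ n := by
          simp only [hu]
          rw [mul_add]
          ring
        rw [Real.norm_eq_abs, this, abs_div, abs_of_pos hpow, div_le_iff₀ hpow]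
        calc |φ (2 ^ n * a + 2 ^ n * b) - φ (2 ^ n * a) - φ (2 ^ n * b)| ≤ C' := key
          _ = C' * (1/2) ^ n * 2 ^ n := by
              rw [mul_assoc, one_div, inv_pow, inv_mul_cancel₀ (by positivity)]
              ring
    have h3 : Filter.Tendsto (u (a + b)) atTop (nhds (g a + g b)) := by
      have := h1.add h2
      simp only [add_zero] at this
      convert this using 2 with n
      ring
    exact tendsto_nhds_unique (hg (a + b) (add_pos ha hb)) h3
  -- g is Lipschitz on positives
  have hglip : ∀ s : ℝ, 0 < s → ∀ t : ℝ, 0 < t → |g s - g t| ≤ L * |s - t| := by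
    intro s hs t ht
    have habs : Filter.Tendsto (fun n => |u s n - u t n|) atTop (nhds |g s - g t|) :=
      ((hg s hs).sub (hg t ht)).abs
    refine le_of_tendsto habs (Filter.Eventually.of_forall fun n => ?_)
    have hpow : (0:ℝ) < 2 ^ n := by positivity
    have key := hLip (2 ^ n * s) (Set.mem_Ici.2 (by positivity)) (2 ^ n * t) (Set.mem_Ici.2 (by positivity))
    have : u s n - u t n = (φ (2 ^ n * s) - φ (2 ^ n * t)) / 2 ^ n := by
      simp only [hu]; ring
    rw [this, abs_div, abs_of_pos hpow, div_le_iff₀ hpow]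
    calc |φ (2 ^ n * s) - φ (2 ^ n * t)| ≤ L * |2 ^ n * s - 2 ^ n * t| := key
      _ = L * |s - t| * 2 ^ n := by
          rw [show (2:ℝ) ^ n * s - 2 ^ n * t = 2 ^ n * (s - t) by ring,
            abs_mul, abs_of_pos hpow]
          ring
  -- g (n+1) * t = (n+1) * g t
  have hgnat : ∀ t : ℝ, 0 < t → ∀ n : ℕ, g ((n + 1 : ℕ) * t) = (n + 1 : ℕ) * g t := by
    intro t ht n
    induction n with
    | zero => simp
    | succ k ih =>
      have h1 : ((k + 1 + 1 : ℕ) : ℝ) * t = ((k + 1 : ℕ) : ℝ) * t + t := by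
        push_cast; ring
      rw [h1, hgadd _ _ (by positivity) ht, ih]
      push_cast; ring
  set c := g 1 with hc
  have hgm : ∀ m : ℕ, 1 ≤ m → g m = m * c := by
    intro m hm
    obtain ⟨k, rfl⟩ := Nat.exists_eq_add_of_le hm
    have := hgnat 1 one_pos k
    simpa [add_comm] using this
  -- g t = c * t for t > 0
  have hglin : ∀ t : ℝ, 0 < t → g t = c * t := by
    intro t ht
    have key : ∀ n : ℕ, |g t - c * t| ≤ (L + |c| + |c| * t) / (n + 1) := by
      intro n
      have hnt : (0:ℝ) < ((n:ℝ) + 1) * t := by positivity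
      set m := ⌈((n:ℝ) + 1) * t⌉₊ with hm
      have hm1 : 1 ≤ m := Nat.one_le_ceil_iff.2 hnt
      have hmge : ((n:ℝ) + 1) * t ≤ m := Nat.le_ceil _
      have hmlt : (m : ℝ) < ((n:ℝ) + 1) * t + 1 := Nat.ceil_lt_add_one hnt.le
      have hmpos : (0:ℝ) < m := lt_of_lt_of_le hnt hmge
      have e1 : g (((n:ℝ) + 1) * t) = ((n:ℝ) + 1) * g t := by
        have := hgnat t ht n
        push_cast at this
        exact this
      have e2 : g m = m * c := hgm m hm1
      have e3 : |g (((n:ℝ) + 1) * t) - g m| ≤ L * |((n:ℝ) + 1) * t - m| :=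
        hglip _ hnt _ hmpos
      have e4 : |((n:ℝ) + 1) * t - (m:ℝ)| ≤ 1 := by
        rw [abs_le]; constructor <;> nlinarith
      have e5 : |g (((n:ℝ) + 1) * t) - g m| ≤ L :=
        e3.trans (by nlinarith [abs_nonneg (((n:ℝ) + 1) * t - (m:ℝ))])
      have e6 : |((n:ℝ) + 1) * (g t - c * t)| ≤ L + |c| := by
        have : ((n:ℝ) + 1) * (g t - c * t)
            = (g (((n:ℝ) + 1) * t) - g m) + ((m:ℝ) - ((n:ℝ) + 1) * t) * c := by
          rw [e1, e2]; ring
        rw [this]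
        calc |(g (((n:ℝ) + 1) * t) - g m) + ((m:ℝ) - ((n:ℝ) + 1) * t) * c|
            ≤ |g (((n:ℝ) + 1) * t) - g m| + |((m:ℝ) - ((n:ℝ) + 1) * t) * c| := abs_add_le _ _
          _ ≤ L + |c| := by
              refine add_le_add e5 ?_
              rw [abs_mul]
              have h4 : |(m:ℝ) - ((n:ℝ) + 1) * t| ≤ 1 := by
                rw [abs_sub_comm]; exact e4
              calc |(m:ℝ) - ((n:ℝ) + 1) * t| * |c| ≤ 1 * |c| :=
                    mul_le_mul_of_nonneg_right h4 (abs_nonneg c)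
                _ = |c| := one_mul _
      rw [abs_mul, abs_of_pos (show (0:ℝ) < (n:ℝ) + 1 by positivity)] at e6
      rw [le_div_iff₀ (show (0:ℝ) < (n:ℝ) + 1 by positivity)]
      calc |g t - c * t| * ((n:ℝ) + 1) = ((n:ℝ) + 1) * |g t - c * t| := by ring
        _ ≤ L + |c| := e6
        _ ≤ L + |c| + |c| * t := by
            have : (0:ℝ) ≤ |c| * t := by positivity
            linarith
    have hlim : Filter.Tendsto (fun n : ℕ => (L + |c| + |c| * t) / ((n:ℝ) + 1)) atTop (nhds 0) := by
      have h0 : Filter.Tendsto (fun n : ℕ => 1 / ((n:ℝ) + 1)) atTop (nhds 0) :=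
        tendsto_one_div_add_atTop_nhds_zero_nat
      have := h0.const_mul (L + |c| + |c| * t)
      simpa [div_eq_mul_inv, mul_comm] using this
    have : |g t - c * t| ≤ 0 :=
      ge_of_tendsto hlim (Filter.Eventually.of_forall key)
    have := abs_nonneg (g t - c * t)
    have h0 : |g t - c * t| = 0 := le_antisymm ‹|g t - c * t| ≤ 0› this
    have := abs_eq_zero.1 h0
    linarith [this]
  refine ⟨c, C', fun t ht => ?_⟩
  have := hclose t ht
  rw [hglin t ht] at this
  exact this
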